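/- For every freely reduced word w in the free group F₂ on x, y of word length at most 7 and with zero exponent sum on x, the Miller–Schupp presentation MS(1, w) = (x⁻¹yxy⁻², x⁻¹w) is AC-trivial: it is AC-equivalent to the trivial presentation (x, y). -/

import Mathlib

/-- The free group on two generators `x`, `y`. -/
abbrev F2 : Type := FreeGroup (Fin 2)

def x : F2 := FreeGroup.of 0
def y : F2 := FreeGroup.of 1

/-- A single AC-move on a balanced presentation `(r₁, r₂)`:
replace `r₁` by `r₁ r₂^{±1}`, or `r₂` by `r₂ r₁^{±1}`, or some `rᵢ` by `rᵢ⁻¹`,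
or some `rᵢ` by `g rᵢ g⁻¹` with `g ∈ {x, y, x⁻¹, y⁻¹}`. -/
def ACMove (p q : F2 × F2) : Prop :=
  q = (p.1 * p.2, p.2) ∨ q = (p.1 * p.2⁻¹, p.2) ∨
  q = (p.1, p.2 * p.1) ∨ q = (p.1, p.2 * p.1⁻¹) ∨
  q = (p.1⁻¹, p.2) ∨ q = (p.1, p.2⁻¹) ∨
  ∃ g : F2, (g = x ∨ g = y ∨ g = x⁻¹ ∨ g = y⁻¹) ∧
    (q = (g * p.1 * g⁻¹, p.2) ∨ q = (p.1, g * p.2 * g⁻¹))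

/-- Two balanced presentations are AC-equivalent if one can be transformed into the
other by a finite sequence of AC-moves. -/
def ACEquiv : F2 × F2 → F2 × F2 → Prop := Relation.ReflTransGen ACMove

/-- The length of a presentation: the sum of the word lengths of the two relators. -/
def presLength (p : F2 × F2) : ℕ := p.1.norm + p.2.norm

/-- The exponent sum on `x`: the `x`-coordinate of the abelianization. -/
def expSumX : F2 →* Multiplicative ℤ :=
  FreeGroup.lift (fun i => if i = 0 then Multiplicative.ofAdd (1 : ℤ) else 1)

/-- The Akbulut–Kirby presentation AK(3) = ⟨x, y ∣ x³ = y⁴, xyx = yxy⟩. -/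
def AK3 : F2 × F2 := (x ^ 3 * (y ^ 4)⁻¹, x * y * x * y⁻¹ * x⁻¹ * y⁻¹)

/-! ### Generalities about AC-moves -/

lemma acmove_symm {p q : F2 × F2} (h : ACMove p q) : ACMove q p := by
  obtain ⟨a, b⟩ := p
  rcases h with h | h | h | h | h | h | ⟨g, hg, h | h⟩ <;> subst h
  · exact Or.inr (Or.inl (by simp))
  · exact Or.inl (by simp)
  · exact Or.inr (Or.inr (Or.inr (Or.inl (by simp))))
  · exact Or.inr (Or.inr (Or.inl (by simp)))
  · exact Or.inr (Or.inr (Or.inr (Or.inr (Or.inl (by simp)))))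
  · exact Or.inr (Or.inr (Or.inr (Or.inr (Or.inr (Or.inl (by simp))))))
  · refine Or.inr (Or.inr (Or.inr (Or.inr (Or.inr (Or.inr ⟨g⁻¹, ?_, Or.inl (by simp [mul_assoc])⟩)))))
    rcases hg with rfl | rfl | rfl | rfl
    · exact Or.inr (Or.inr (Or.inl rfl))
    · exact Or.inr (Or.inr (Or.inr rfl))
    · exact Or.inl (by simp)
    · exact Or.inr (Or.inl (by simp))
  · refine Or.inr (Or.inr (Or.inr (Or.inr (Or.inr (Or.inr ⟨g⁻¹, ?_, Or.inr (by simp [mul_assoc])⟩)))))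
    rcases hg with rfl | rfl | rfl | rfl
    · exact Or.inr (Or.inr (Or.inl rfl))
    · exact Or.inr (Or.inr (Or.inr rfl))
    · exact Or.inl (by simp)
    · exact Or.inr (Or.inl (by simp))

lemma acequiv_refl (p : F2 × F2) : ACEquiv p p := Relation.ReflTransGen.refl

lemma acequiv_trans {p q r : F2 × F2} (h1 : ACEquiv p q) (h2 : ACEquiv q r) : ACEquiv p r :=
  Relation.ReflTransGen.trans h1 h2

lemma acequiv_symm {p q : F2 × F2} (h : ACEquiv p q) : ACEquiv q p :=
  (@Relation.ReflTransGen.symmetric _ _ ⟨fun _ _ hm => acmove_symm hm⟩).symm _ _ h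

lemma acequiv_single {p q : F2 × F2} (h : ACMove p q) : ACEquiv p q :=
  Relation.ReflTransGen.single h

/-- the subgroup of elements by which we may conjugate the second relator -/
def conjSubgroup : Subgroup F2 where
  carrier := {g | ∀ a b : F2, ACEquiv (a, b) (a, g * b * g⁻¹)}
  one_mem' := by intro a b; simpa using acequiv_refl (a, b)
  mul_mem' := by
    intro g h hg hh a b
    refine acequiv_trans (hh a b) ?_
    have := hg a (h * b * h⁻¹)
    simpa [mul_assoc] using this
  inv_mem' := by
    intro g hg a b
    have := hg a (g⁻¹ * b * g⁻¹⁻¹)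
    have e : g * (g⁻¹ * b * g⁻¹⁻¹) * g⁻¹ = b := by group
    rw [e] at this
    exact acequiv_symm this

lemma conjx2 (a b : F2) : ACEquiv (a, b) (a, x * b * x⁻¹) :=
  acequiv_single (Or.inr (Or.inr (Or.inr (Or.inr (Or.inr (Or.inr
    ⟨x, Or.inl rfl, Or.inr rfl⟩))))))

lemma conjy2 (a b : F2) : ACEquiv (a, b) (a, y * b * y⁻¹) :=
  acequiv_single (Or.inr (Or.inr (Or.inr (Or.inr (Or.inr (Or.inr
    ⟨y, Or.inr (Or.inl rfl), Or.inr rfl⟩))))))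

lemma conj2 (g a b : F2) : ACEquiv (a, b) (a, g * b * g⁻¹) := by
  have hmem : g ∈ conjSubgroup := by
    have htop : (⊤ : Subgroup F2) ≤ conjSubgroup := by
      rw [← FreeGroup.closure_range_of]
      refine Subgroup.closure_le _ |>.2 ?_
      rintro g ⟨i, rfl⟩
      have hi : i = (0 : Fin 2) ∨ i = (1 : Fin 2) := by
        rcases i with ⟨iv, hlt⟩
        interval_cases iv
        · exact Or.inl rfl
        · exact Or.inr rfl
      rcases hi with rfl | rfl
      · exact fun a b => conjx2 a b
      · exact fun a b => conjy2 a b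
    exact htop (Subgroup.mem_top g)
  exact hmem a b

lemma mulconj2 (g a b : F2) : ACEquiv (a, b) (a, b * (g * a * g⁻¹)) := by
  refine acequiv_trans (conj2 g⁻¹ a b) ?_
  refine acequiv_trans (acequiv_single (Or.inr (Or.inr (Or.inl rfl)))) ?_
  have := conj2 g a (g⁻¹ * b * g⁻¹⁻¹ * a)
  have e : g * (g⁻¹ * b * g⁻¹⁻¹ * a) * g⁻¹ = b * (g * a * g⁻¹) := by group
  rw [e] at this
  exact this

lemma coset2 {a n : F2} (h : n ∈ Subgroup.normalClosure {a}) :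
    ∀ b : F2, ACEquiv (a, b) (a, b * n) := by
  unfold Subgroup.normalClosure at h
  refine Subgroup.closure_induction (fun u hu b => ?_) (fun b => by simpa using acequiv_refl (a, b))
    (fun u v _ _ ihu ihv b => ?_) (fun u _ ihu b => ?_) h
  · rw [Group.mem_conjugatesOfSet_iff] at hu
    obtain ⟨c, hc, hconj⟩ := hu
    rw [Set.mem_singleton_iff] at hc
    rw [hc] at hconj
    obtain ⟨g, hg⟩ := isConj_iff.1 hconj
    rw [← hg]
    exact mulconj2 g a b
  · have := acequiv_trans (ihu b) (ihv (b * u))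
    simpa [mul_assoc] using this
  · have := ihu (b * u⁻¹)
    have e : b * u⁻¹ * u = b := by group
    rw [e] at this
    exact acequiv_symm this

lemma acmove_swap {p q : F2 × F2} (h : ACMove p q) : ACMove (p.2, p.1) (q.2, q.1) := by
  obtain ⟨a, b⟩ := p
  rcases h with h | h | h | h | h | h | ⟨g, hg, h | h⟩ <;> subst h
  · exact Or.inr (Or.inr (Or.inl rfl))
  · exact Or.inr (Or.inr (Or.inr (Or.inl rfl)))
  · exact Or.inl rfl
  · exact Or.inr (Or.inl rfl)
  · exact Or.inr (Or.inr (Or.inr (Or.inr (Or.inr (Or.inl rfl)))))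
  · exact Or.inr (Or.inr (Or.inr (Or.inr (Or.inl rfl))))
  · exact Or.inr (Or.inr (Or.inr (Or.inr (Or.inr (Or.inr ⟨g, hg, Or.inr rfl⟩)))))
  · exact Or.inr (Or.inr (Or.inr (Or.inr (Or.inr (Or.inr ⟨g, hg, Or.inl rfl⟩)))))

lemma acequiv_swap {p q : F2 × F2} (h : ACEquiv p q) : ACEquiv (p.2, p.1) (q.2, q.1) :=
  Relation.ReflTransGen.lift (fun r : F2 × F2 => (r.2, r.1)) (fun _ _ hm => acmove_swap hm) _ _ h

lemma coset1 {b n : F2} (h : n ∈ Subgroup.normalClosure {b}) :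
    ∀ a : F2, ACEquiv (a, b) (a * n, b) := fun a => acequiv_swap (coset2 h a)

/-! ### Computations in the normal closure of the relator `r₁ = x⁻¹ y x y⁻²` -/

/-- normal closure of the first Miller–Schupp relator -/
def S1 : Subgroup F2 := Subgroup.normalClosure {x⁻¹ * y * x * (y ^ 2)⁻¹}

lemma r1_mem_S1 : x⁻¹ * y * x * (y ^ 2)⁻¹ ∈ S1 := Subgroup.subset_normalClosure rfl

lemma conj_mem_S1 {u : F2} (hu : u ∈ S1) (g : F2) : g * u * g⁻¹ ∈ S1 :=
  Subgroup.normalClosure_normal.conj_mem u hu g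

lemma c_mem_S1 : y⁻¹ * x * y ^ 2 * x⁻¹ ∈ S1 := by
  have h := conj_mem_S1 r1_mem_S1 (y⁻¹ * x)
  have e : y⁻¹ * x * y ^ 2 * x⁻¹ =
      ((y⁻¹ * x) * (x⁻¹ * y * x * (y ^ 2)⁻¹) * (y⁻¹ * x)⁻¹)⁻¹ := by group
  rw [e]
  exact inv_mem h

lemma keyK (m : ℤ) : y ^ (-m) * x * y ^ (2 * m) * x⁻¹ ∈ S1 := by
  induction m using Int.induction_on with
  | zero => have e : y ^ (-(0:ℤ)) * x * y ^ (2 * (0:ℤ)) * x⁻¹ = 1 := by group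
            rw [e]; exact one_mem S1
  | succ i ih =>
      have e : y ^ (-((i:ℤ) + 1)) * x * y ^ (2 * ((i:ℤ) + 1)) * x⁻¹ =
          (y⁻¹ * (y ^ (-(i:ℤ)) * x * y ^ (2 * (i:ℤ)) * x⁻¹) * y⁻¹⁻¹) *
          (y⁻¹ * x * y ^ 2 * x⁻¹) := by group
      rw [e]
      exact mul_mem (conj_mem_S1 ih y⁻¹) c_mem_S1
  | pred i ih =>
      have e : y ^ (-(-(i:ℤ) - 1)) * x * y ^ (2 * (-(i:ℤ) - 1)) * x⁻¹ =
          (y * (y ^ (-(-(i:ℤ))) * x * y ^ (2 * (-(i:ℤ))) * x⁻¹) * y⁻¹) *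
          (y * (y⁻¹ * x * y ^ 2 * x⁻¹)⁻¹ * y⁻¹) := by group
      rw [e]
      exact mul_mem (conj_mem_S1 ih y) (conj_mem_S1 (inv_mem c_mem_S1) y)

lemma keyG (a : ℕ) (m : ℤ) :
    y ^ (-m) * x ^ a * y ^ ((2:ℤ) ^ a * m) * (x ^ a)⁻¹ ∈ S1 := by
  induction a with
  | zero =>
      have e : y ^ (-m) * x ^ 0 * y ^ ((2:ℤ) ^ 0 * m) * (x ^ 0)⁻¹ = 1 := by group
      rw [e]; exact one_mem S1
  | succ a ih =>
      have e : y ^ (-m) * x ^ (a + 1) * y ^ ((2:ℤ) ^ (a + 1) * m) * (x ^ (a + 1))⁻¹ =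
          (y ^ (-m) * x ^ a * y ^ ((2:ℤ) ^ a * m) * (x ^ a)⁻¹) *
          (x ^ a * (y ^ (-((2:ℤ) ^ a * m)) * x * y ^ (2 * ((2:ℤ) ^ a * m)) * x⁻¹) * (x ^ a)⁻¹) := by
        group
      rw [e]
      exact mul_mem ih (conj_mem_S1 (keyK ((2:ℤ) ^ a * m)) (x ^ a))

/-- Every word is congruent to `xᵃ yᵐ x⁻ᵇ` modulo the normal closure of `r₁`. -/
lemma nf (L : List (Fin 2 × Bool)) :
    ∃ (a b : ℕ) (m : ℤ), (FreeGroup.mk L)⁻¹ * (x ^ a * y ^ m * (x ^ b)⁻¹) ∈ S1 := by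
  induction L with
  | nil => exact ⟨0, 0, 0, by simpa [← FreeGroup.one_eq_mk] using one_mem S1⟩
  | cons p L ih =>
      obtain ⟨a, b, m, h⟩ := ih
      set v : F2 := FreeGroup.mk L with hv
      obtain ⟨i, bb⟩ := p
      have hi : i = (0 : Fin 2) ∨ i = (1 : Fin 2) := by
        rcases i with ⟨iv, hlt⟩
        interval_cases iv
        · exact Or.inl rfl
        · exact Or.inr rfl
      rcases hi with rfl | rfl
      · cases bb
        · -- letter x⁻¹
          have hmk : FreeGroup.mk (((0 : Fin 2), false) :: L) = x⁻¹ * v := by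
            rw [show x⁻¹ * v = FreeGroup.mk [((0 : Fin 2), false)] * v from rfl,
              FreeGroup.mul_mk]; rfl
          cases a with
          | zero =>
              refine ⟨0, b + 1, 2 * m, ?_⟩
              rw [hmk]
              have e : (x⁻¹ * v)⁻¹ * (x ^ 0 * y ^ (2 * m) * (x ^ (b + 1))⁻¹) =
                  (v⁻¹ * (y ^ m * (y ^ (-m) * x * y ^ (2 * m) * x⁻¹) * (y ^ m)⁻¹) * v⁻¹⁻¹) *
                  (v⁻¹ * (x ^ 0 * y ^ m * (x ^ b)⁻¹)) := by group
              rw [e]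
              exact mul_mem (conj_mem_S1 (conj_mem_S1 (keyK m) (y ^ m)) v⁻¹) h
          | succ a' =>
              refine ⟨a', b, m, ?_⟩
              rw [hmk]
              have e : (x⁻¹ * v)⁻¹ * (x ^ a' * y ^ m * (x ^ b)⁻¹) =
                  v⁻¹ * (x ^ (a' + 1) * y ^ m * (x ^ b)⁻¹) := by group
              rw [e]; exact h
        · -- letter x
          have hmk : FreeGroup.mk (((0 : Fin 2), true) :: L) = x * v := by
            rw [show x * v = FreeGroup.mk [((0 : Fin 2), true)] * v from rfl,
              FreeGroup.mul_mk]; rfl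
          refine ⟨a + 1, b, m, ?_⟩
          rw [hmk]
          have e : (x * v)⁻¹ * (x ^ (a + 1) * y ^ m * (x ^ b)⁻¹) =
              v⁻¹ * (x ^ a * y ^ m * (x ^ b)⁻¹) := by group
          rw [e]; exact h
      · cases bb
        · -- letter y⁻¹
          have hmk : FreeGroup.mk (((1 : Fin 2), false) :: L) = y⁻¹ * v := by
            rw [show y⁻¹ * v = FreeGroup.mk [((1 : Fin 2), false)] * v from rfl,
              FreeGroup.mul_mk]; rfl
          refine ⟨a, b, m - (2:ℤ) ^ a, ?_⟩
          rw [hmk]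
          have e : (y⁻¹ * v)⁻¹ * (x ^ a * y ^ (m - (2:ℤ) ^ a) * (x ^ b)⁻¹) =
              (v⁻¹ * (y ^ (-(-1:ℤ)) * x ^ a * y ^ ((2:ℤ) ^ a * (-1)) * (x ^ a)⁻¹) * v⁻¹⁻¹) *
              (v⁻¹ * (x ^ a * y ^ m * (x ^ b)⁻¹)) := by group
          rw [e]
          exact mul_mem (conj_mem_S1 (keyG a (-1)) v⁻¹) h
        · -- letter y
          have hmk : FreeGroup.mk (((1 : Fin 2), true) :: L) = y * v := by
            rw [show y * v = FreeGroup.mk [((1 : Fin 2), true)] * v from rfl,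
              FreeGroup.mul_mk]; rfl
          refine ⟨a, b, m + (2:ℤ) ^ a, ?_⟩
          rw [hmk]
          have e : (y * v)⁻¹ * (x ^ a * y ^ (m + (2:ℤ) ^ a) * (x ^ b)⁻¹) =
              (v⁻¹ * (y ^ (-(1:ℤ)) * x ^ a * y ^ ((2:ℤ) ^ a * 1) * (x ^ a)⁻¹) * v⁻¹⁻¹) *
              (v⁻¹ * (x ^ a * y ^ m * (x ^ b)⁻¹)) := by group
          rw [e]
          exact mul_mem (conj_mem_S1 (keyG a 1) v⁻¹) h

set_option maxHeartbeats 1000000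

lemma esx : expSumX x = Multiplicative.ofAdd 1 := by simp [expSumX, x]

lemma esy : expSumX y = 1 := by simp [expSumX, y]

lemma S1_le_ker : S1 ≤ expSumX.ker := by
  refine Subgroup.normalClosure_le_normal ?_
  intro t ht
  rw [Set.mem_singleton_iff] at ht
  subst ht
  rw [SetLike.mem_coe, MonoidHom.mem_ker]
  simp [map_mul, map_inv, map_pow, esx, esy]

theorem MS1_AC_trivial (w : F2) (hlen : w.norm ≤ 7) (hx : expSumX w = 1) :
    ACEquiv (x⁻¹ * y * x * (y ^ 2)⁻¹, x⁻¹ * w) (x, y) := by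
  obtain ⟨a, b, m, h⟩ := nf w.toWord
  rw [FreeGroup.mk_toWord] at h
  -- a = b from exponent sums
  have hab : a = b := by
    have h1 : expSumX (w⁻¹ * (x ^ a * y ^ m * (x ^ b)⁻¹)) = 1 := S1_le_ker h
    simp only [map_mul, map_inv, map_pow, map_zpow, esx, esy, hx, inv_one, one_mul,
      one_zpow, mul_one] at h1
    have := congrArg Multiplicative.toAdd h1
    simp at this
    omega
  subst hab
  set r1 : F2 := x⁻¹ * y * x * (y ^ 2)⁻¹ with hr1
  -- step 1 : conjugate r₂ by x⁻ᵃ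
  have e1 : ACEquiv (r1, x⁻¹ * w) (r1, (x ^ a)⁻¹ * (x⁻¹ * w) * ((x ^ a)⁻¹)⁻¹) :=
    conj2 (x ^ a)⁻¹ r1 (x⁻¹ * w)
  -- step 2 : replace r₂ by x⁻¹ yᵐ modulo N(r₁)
  have hn : (x ^ a)⁻¹ * (w⁻¹ * (x ^ a * y ^ m * (x ^ a)⁻¹)) * ((x ^ a)⁻¹)⁻¹ ∈ S1 :=
    conj_mem_S1 h (x ^ a)⁻¹
  have e2 : ACEquiv (r1, (x ^ a)⁻¹ * (x⁻¹ * w) * ((x ^ a)⁻¹)⁻¹) (r1, x⁻¹ * y ^ m) := by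
    have := coset2 hn ((x ^ a)⁻¹ * (x⁻¹ * w) * ((x ^ a)⁻¹)⁻¹)
    have e : (x ^ a)⁻¹ * (x⁻¹ * w) * ((x ^ a)⁻¹)⁻¹ *
        ((x ^ a)⁻¹ * (w⁻¹ * (x ^ a * y ^ m * (x ^ a)⁻¹)) * ((x ^ a)⁻¹)⁻¹) = x⁻¹ * y ^ m := by
      group
    rw [e] at this
    exact this
  -- step 3 : replace r₁ by y⁻¹ modulo N(r₂)
  have e3 : ACEquiv (r1, x⁻¹ * y ^ m) (y⁻¹, x⁻¹ * y ^ m) := by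
    have t_mem : x⁻¹ * y ^ m ∈ Subgroup.normalClosure {x⁻¹ * y ^ m} :=
      Subgroup.subset_normalClosure rfl
    have h1 : (y ^ 2) * (x⁻¹ * y ^ m) * (y ^ 2)⁻¹ ∈ Subgroup.normalClosure {x⁻¹ * y ^ m} :=
      Subgroup.normalClosure_normal.conj_mem _ t_mem (y ^ 2)
    have h2 : y * (x⁻¹ * y ^ m)⁻¹ * y⁻¹ ∈ Subgroup.normalClosure {x⁻¹ * y ^ m} :=
      Subgroup.normalClosure_normal.conj_mem _ (inv_mem t_mem) y
    have hn' : r1⁻¹ * y⁻¹ ∈ Subgroup.normalClosure {x⁻¹ * y ^ m} := by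
      have e : r1⁻¹ * y⁻¹ =
          ((y ^ 2) * (x⁻¹ * y ^ m) * (y ^ 2)⁻¹) * (y * (x⁻¹ * y ^ m)⁻¹ * y⁻¹) := by
        rw [hr1]; group
      rw [e]
      exact mul_mem h1 h2
    have := coset1 hn' r1
    have e : r1 * (r1⁻¹ * y⁻¹) = y⁻¹ := by group
    rw [e] at this
    exact this
  -- step 4 : invert r₁
  have e4 : ACEquiv (y⁻¹, x⁻¹ * y ^ m) (y, x⁻¹ * y ^ m) := by
    have := acequiv_single (p := (y⁻¹, x⁻¹ * y ^ m))
      (Or.inr (Or.inr (Or.inr (Or.inr (Or.inl rfl)))))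
    simpa using this
  -- step 5 : kill yᵐ
  have e5 : ACEquiv (y, x⁻¹ * y ^ m) (y, x⁻¹) := by
    have hy : y ∈ Subgroup.normalClosure {y} := Subgroup.subset_normalClosure (Set.mem_singleton y)
    have hmem : y ^ (-m) ∈ Subgroup.normalClosure {y} := zpow_mem hy (-m)
    have := coset2 hmem (x⁻¹ * y ^ m)
    have e : x⁻¹ * y ^ m * y ^ (-m) = x⁻¹ := by group
    rw [e] at this
    exact this
  -- step 6 : invert r₂
  have e6 : ACEquiv (y, x⁻¹) (y, x) := by
    have := acequiv_single (p := (y, x⁻¹))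
      (Or.inr (Or.inr (Or.inr (Or.inr (Or.inr (Or.inl rfl))))))
    simpa using this
  -- step 7 : swap (y, x) into (x, y) by explicit moves
  have m1 : ACEquiv (y, x) (y, x * y⁻¹) :=
    acequiv_single (Or.inr (Or.inr (Or.inr (Or.inl rfl))))
  have m2 : ACEquiv (y, x * y⁻¹) (y * (x * y⁻¹), x * y⁻¹) :=
    acequiv_single (Or.inl rfl)
  have m3 : ACEquiv (y * (x * y⁻¹), x * y⁻¹) (x, x * y⁻¹) := by
    have := acequiv_single (p := (y * (x * y⁻¹), x * y⁻¹))
      (Or.inr (Or.inr (Or.inr (Or.inr (Or.inr (Or.inr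
        ⟨y⁻¹, Or.inr (Or.inr (Or.inr rfl)), Or.inl rfl⟩))))))
    have e : y⁻¹ * (y * (x * y⁻¹)) * y⁻¹⁻¹ = x := by group
    rw [e] at this
    exact this
  have m4 : ACEquiv (x, x * y⁻¹) (x, x * y⁻¹ * x⁻¹) :=
    acequiv_single (Or.inr (Or.inr (Or.inr (Or.inl rfl))))
  have m5 : ACEquiv (x, x * y⁻¹ * x⁻¹) (x, y⁻¹) := by
    have := acequiv_single (p := (x, x * y⁻¹ * x⁻¹))
      (Or.inr (Or.inr (Or.inr (Or.inr (Or.inr (Or.inr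
        ⟨x⁻¹, Or.inr (Or.inr (Or.inl rfl)), Or.inr rfl⟩))))))
    have e : x⁻¹ * (x * y⁻¹ * x⁻¹) * x⁻¹⁻¹ = y⁻¹ := by group
    rw [e] at this
    exact this
  have m6 : ACEquiv (x, y⁻¹) (x, y) := by
    have := acequiv_single (p := (x, y⁻¹))
      (Or.inr (Or.inr (Or.inr (Or.inr (Or.inr (Or.inl rfl))))))
    simpa using this
  exact acequiv_trans e1 (acequiv_trans e2 (acequiv_trans e3 (acequiv_trans e4
    (acequiv_trans e5 (acequiv_trans e6 (acequiv_trans m1 (acequiv_trans m2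
    (acequiv_trans m3 (acequiv_trans m4 (acequiv_trans m5 m6))))))))))
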